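/- Let G be a group containing a nontrivial, finitely generated normal subgroup of infinite index. Then G is not a free group. In particular, if F is an infinite finitely generated group and G = F ⋊_φ ℤ is a suspension of F, then G is not a free group. -/

import Mathlib

namespace NotFreeAux
open FreeGroup List

variable {ι : Type} [DecidableEq ι]

/-- The no-cancellation relation between adjacent letters. -/
def R : ι × Bool → ι × Bool → Prop := fun a b => ¬(a.1 = b.1 ∧ b.2 = !a.2)

lemma not_chain'_exists : ∀ {L : List (ι × Bool)}, ¬ List.Chain' R L →
    ∃ (L₁ L₂ : List (ι × Bool)) (x : ι) (b : Bool), L = L₁ ++ (x, b) :: (x, !b) :: L₂ := by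
  intro L
  induction L with
  | nil => intro h; simp [List.Chain'] at h
  | cons a t ih =>
    intro h
    cases t with
    | nil => simp [List.Chain'] at h
    | cons b t' =>
      rw [List.Chain', List.isChain_cons_cons] at h
      by_cases hr : R a b
      · obtain ⟨L₁, L₂, x, bb, hL⟩ := ih (fun hc => h ⟨hr, hc⟩)
        exact ⟨a :: L₁, L₂, x, bb, by rw [hL]; rfl⟩
      · rw [R, not_not] at hr
        have hb : b = (a.1, !a.2) := Prod.ext hr.1.symm hr.2
        exact ⟨[], t', a.1, a.2, by simp [hb]⟩

lemma chain'_reduce (L : List (ι × Bool)) : List.Chain' R (reduce L) := by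
  by_contra h
  obtain ⟨L₁, L₂, x, b, hL⟩ := not_chain'_exists h
  exact reduce.not hL

lemma chain'_toWord (g : FreeGroup ι) : List.Chain' R g.toWord := by
  rw [← reduce_toWord]; exact chain'_reduce _

lemma reduce_eq_self : ∀ {L : List (ι × Bool)}, List.Chain' R L → reduce L = L := by
  intro L
  induction L with
  | nil => intro _; rfl
  | cons x t ih =>
    intro h
    have ht : reduce t = t := ih h.tail
    rw [reduce.cons, ht]
    cases t with
    | nil => rfl
    | cons hd tl =>
      have hr : R x hd := (List.isChain_cons_cons.1 h).1
      have : ¬(x.1 = hd.1 ∧ x.2 = !hd.2) := by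
        rintro ⟨h1, h2⟩
        exact hr ⟨h1, by rw [h2, Bool.not_not]⟩
      simp only [this, if_false]

lemma mk_pair_one (x : ι × Bool) : mk [x, (x.1, !x.2)] = (1 : FreeGroup ι) := by
  have h1 : mk [x, (x.1, !x.2)] = mk [x] * mk [(x.1, !x.2)] := by rw [mul_mk]; rfl
  have h2 : (mk [x] : FreeGroup ι)⁻¹ = mk [(x.1, !x.2)] := by
    rw [inv_mk]; simp [invRev]
  rw [h1, ← h2, mul_inv_cancel]

lemma prefix_reduce : ∀ {L p : List (ι × Bool)}, p <+: reduce L →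
    ∃ q, q <+: L ∧ mk q = mk p := by
  intro L
  induction L with
  | nil => intro p hp; simp only [reduce_nil, List.prefix_nil] at hp; exact ⟨[], by simp [hp]⟩
  | cons x t ih =>
    intro p hp
    rw [reduce.cons] at hp
    rcases hr : reduce t with _ | ⟨hd, tl⟩
    · rw [hr] at hp
      simp only at hp
      rcases List.prefix_cons_iff.mp hp with h | ⟨p', rfl, hp'⟩
      · exact ⟨[], by simp [h]⟩
      · rw [List.prefix_nil] at hp'
        subst hp'
        exact ⟨[x], List.cons_prefix_cons.mpr ⟨rfl, by simp⟩, rfl⟩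
    · rw [hr] at hp
      simp only at hp
      by_cases hc : x.1 = hd.1 ∧ x.2 = !hd.2
      · rw [if_pos hc] at hp
        have hp' : hd :: p <+: reduce t := by rw [hr]; exact List.cons_prefix_cons.mpr ⟨rfl, hp⟩
        obtain ⟨q, hq, hmk⟩ := ih hp'
        refine ⟨x :: q, List.cons_prefix_cons.mpr ⟨rfl, hq⟩, ?_⟩
        have hhd : hd = (x.1, !x.2) := Prod.ext hc.1.symm (by rw [hc.2, Bool.not_not])
        have : mk (x :: q) = mk [x] * mk q := by rw [mul_mk]; rfl
        rw [this, hmk]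
        have : mk (hd :: p) = mk [hd] * mk p := by rw [mul_mk]; rfl
        rw [this, ← mul_assoc]
        have : mk [x] * mk [hd] = 1 := by
          rw [hhd, ← mk_pair_one x, mul_mk]; rfl
        rw [this, one_mul]
      · rw [if_neg hc] at hp
        rcases List.prefix_cons_iff.mp hp with h | ⟨p', rfl, hp'⟩
        · exact ⟨[], by simp [h]⟩
        · have hp'' : p' <+: reduce t := by rw [hr]; exact hp'
          obtain ⟨q, hq, hmk⟩ := ih hp''
          refine ⟨x :: q, List.cons_prefix_cons.mpr ⟨rfl, hq⟩, ?_⟩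
          have e1 : mk (x :: q) = mk [x] * mk q := by rw [mul_mk]; rfl
          have e2 : mk (x :: p') = mk [x] * mk p' := by rw [mul_mk]; rfl
          rw [e1, e2, hmk]


lemma prefix_append_cases {p l₁ l₂ : List (ι × Bool)} (h : p <+: l₁ ++ l₂) :
    p <+: l₁ ∨ ∃ r, r <+: l₂ ∧ p = l₁ ++ r := by
  rcases le_or_gt p.length l₁.length with hle | hlt
  · exact Or.inl (List.prefix_of_prefix_length_le h (l₁.prefix_append l₂) hle)
  · right
    obtain ⟨r, rfl⟩ := List.prefix_of_prefix_length_le (l₁.prefix_append l₂) h hlt.le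
    obtain ⟨u, hu⟩ := h
    rw [List.append_assoc] at hu
    exact ⟨r, ⟨u, List.append_cancel_left hu⟩, rfl⟩

lemma invRev_append' (A B : List (ι × Bool)) : invRev (A ++ B) = invRev B ++ invRev A := by
  simp [invRev]

/-- Every coset representative shift by an element of a normal subgroup. -/
lemma mk_mul_eq {N : Subgroup (FreeGroup ι)} (hn : N.Normal) {n : FreeGroup ι} (hmem : n ∈ N)
    (z : FreeGroup ι) : (QuotientGroup.mk (n * z) : FreeGroup ι ⧸ N) = QuotientGroup.mk z := by
  refine (QuotientGroup.eq).2 ?_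
  have : (n * z)⁻¹ * z = z⁻¹ * n⁻¹ * z := by group
  rw [this]
  have := hn.conj_mem n⁻¹ (N.inv_mem hmem) z⁻¹
  simpa using this

/-- Core lemma: every prefix of a reduced word of an element of `N = closure S`
lands, modulo `N`, in the finite set of cosets of prefixes of the generators. -/
lemma prefix_coset_mem {N : Subgroup (FreeGroup ι)} (hn : N.Normal) {S : Finset (FreeGroup ι)}
    (hS : Subgroup.closure (S : Set (FreeGroup ι)) = N) :
    ∀ h ∈ N, ∀ p, p <+: h.toWord →
      (QuotientGroup.mk (mk p) : FreeGroup ι ⧸ N) ∈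
        (fun w => (QuotientGroup.mk (FreeGroup.mk w) : FreeGroup ι ⧸ N)) ''
          ({[]} ∪ ⋃ s ∈ (S : Set (FreeGroup ι)), {p | p <+: s.toWord} ∪ {p | p <+: s⁻¹.toWord}) := by
  intro h hmem
  set img := (fun w => (QuotientGroup.mk (FreeGroup.mk w) : FreeGroup ι ⧸ N)) ''
          ({[]} ∪ ⋃ s ∈ (S : Set (FreeGroup ι)), {p | p <+: s.toWord} ∪ {p | p <+: s⁻¹.toWord}) with himg
  rw [← hS] at hmem
  have key : h ∈ N ∧ ∀ p, p <+: h.toWord → (QuotientGroup.mk (mk p) : FreeGroup ι ⧸ N) ∈ img := by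
    induction hmem using Subgroup.closure_induction with
    | mem s hs =>
      refine ⟨hS ▸ Subgroup.subset_closure hs, fun p hp => ?_⟩
      exact ⟨p, Or.inr (Set.mem_biUnion hs (Or.inl hp)), rfl⟩
    | one =>
      refine ⟨one_mem N, fun p hp => ?_⟩
      rw [toWord_one, List.prefix_nil] at hp
      exact ⟨[], Or.inl rfl, by rw [hp]⟩
    | mul x y hx hy ihx ihy =>
      refine ⟨N.mul_mem ihx.1 ihy.1, fun p hp => ?_⟩
      have hxy : (x * y).toWord = reduce (x.toWord ++ y.toWord) := by
        have hx' : x * y = mk (x.toWord ++ y.toWord) := by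
          rw [← mul_mk, mk_toWord, mk_toWord]
        rw [hx', toWord_mk]
      rw [hxy] at hp
      obtain ⟨q, hq, hmk⟩ := prefix_reduce hp
      have hcoset : (QuotientGroup.mk (mk p) : FreeGroup ι ⧸ N) = QuotientGroup.mk (mk q) := by
        rw [hmk]
      rw [hcoset]
      rcases prefix_append_cases hq with hq1 | ⟨r, hr, rfl⟩
      · exact ihx.2 q hq1
      · have : mk (x.toWord ++ r) = x * mk r := by
          rw [← mul_mk, mk_toWord]
        rw [this, mk_mul_eq hn ihx.1]
        exact ihy.2 r hr
    | inv x hx ihx =>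
      refine ⟨N.inv_mem ihx.1, fun p hp => ?_⟩
      rw [toWord_inv] at hp
      obtain ⟨u, hu⟩ := hp
      have hL : x.toWord = invRev u ++ invRev p := by
        have := congrArg invRev hu
        rw [invRev_append', invRev_invRev] at this
        exact this.symm
      have hmkp : mk p = x⁻¹ * mk (invRev u) := by
        have h1 : mk (invRev p) = (mk p)⁻¹ := by rw [← inv_mk]
        have h2 : mk x.toWord = x := mk_toWord
        rw [hL, ← mul_mk, h1] at h2
        have := congrArg (fun z => (mk (invRev u))⁻¹ * z) h2
        simp only [← mul_assoc, inv_mul_cancel, one_mul] at this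
        rw [← inv_inv (mk p), this]
        group
      rw [hmkp, mk_mul_eq hn (N.inv_mem ihx.1)]
      exact ihx.2 (invRev u) ⟨invRev p, hL.symm ▸ rfl⟩
  exact key.2


lemma exists_letter {a b : ι} (hab : a ≠ b) (u v z : ι × Bool) :
    ∃ x : ι × Bool, x ≠ u ∧ x ≠ v ∧ x ≠ z := by
  by_contra hcon
  push_neg at hcon
  have hall : ∀ st : Bool × Bool, ((if st.1 then a else b, st.2) : ι × Bool) ∈
      ({u, v, z} : Finset (ι × Bool)) := by
    intro st
    by_cases h1 : ((if st.1 then a else b, st.2) : ι × Bool) = u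
    · simp [h1]
    by_cases h2 : ((if st.1 then a else b, st.2) : ι × Bool) = v
    · simp [h2]
    have h3 := hcon _ h1 h2
    simp [h3]
  have hinj : Set.InjOn (fun st : Bool × Bool => ((if st.1 then a else b, st.2) : ι × Bool))
      ↑(Finset.univ : Finset (Bool × Bool)) := by
    rintro ⟨s, t⟩ - ⟨s', t'⟩ - h
    rw [Prod.ext_iff] at h
    obtain ⟨h1, h2⟩ := h
    cases s <;> cases s' <;> simp_all
  have hcard := Finset.card_le_card_of_injOn _ (fun st _ => hall st) hinj
  have h4 : (Finset.univ : Finset (Bool × Bool)).card = 4 := by decide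
  have h3 : ({u, v, z} : Finset (ι × Bool)).card ≤ 3 := by
    refine le_trans (Finset.card_insert_le _ _) ?_
    have := Finset.card_insert_le v ({z} : Finset (ι × Bool))
    simp only [Finset.card_singleton] at this ⊢
    omega
  omega

lemma exists_prefix_in_N {N : Subgroup (FreeGroup ι)} (hn : N.Normal) {a b : ι} (hab : a ≠ b)
    {w : FreeGroup ι} (hw : w ∈ N) (hw1 : w ≠ 1) (g : FreeGroup ι) :
    ∃ h ∈ N, g.toWord <+: h.toWord := by
  rcases eq_or_ne g 1 with rfl | hg
  · exact ⟨1, one_mem N, by simp [toWord_one]⟩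
  have hgw : g.toWord ≠ [] := fun h => hg (toWord_eq_nil_iff.mp h)
  have hww : w.toWord ≠ [] := fun h => hw1 (toWord_eq_nil_iff.mp h)
  set c := g.toWord.getLast hgw with hc
  set h₀ := w.toWord.head hww with hh₀
  set l₀ := w.toWord.getLast hww with hl₀
  obtain ⟨x, hxc, hxh, hxl⟩ := exists_letter hab (c.1, !c.2) (h₀.1, !h₀.2) l₀
  set x' : ι × Bool := (x.1, !x.2) with hx'
  set A := g.toWord with hA
  set wT := w.toWord with hwT
  set C := invRev g.toWord with hCdef
  set v := mk [x] * w * (mk [x])⁻¹ with hv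
  have hvN : v ∈ N := hn.conj_mem w hw (mk [x])
  refine ⟨g * v * g⁻¹, hn.conj_mem v hvN g, ?_⟩
  have hmkx' : (mk [x] : FreeGroup ι)⁻¹ = mk [x'] := by
    rw [inv_mk]; simp [invRev, hx']
  have hmkC : (g : FreeGroup ι)⁻¹ = mk C := by
    rw [hCdef, ← inv_mk, mk_toWord]
  have hprod : g * v * g⁻¹ = mk (A ++ [x] ++ wT ++ [x'] ++ C) := by
    rw [← mul_mk, ← mul_mk, ← mul_mk, ← mul_mk]
    rw [hA, hwT, mk_toWord, mk_toWord, ← hmkx', ← hmkC, hv]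
    group
  -- reducedness of the big word
  have CA : List.Chain' R A := chain'_toWord g
  have CwT : List.Chain' R wT := chain'_toWord w
  have CC : List.Chain' R C := by
    have := chain'_toWord g⁻¹
    rwa [toWord_inv] at this
  have hlastA : A.getLast? = some c := by rw [List.getLast?_eq_getLast hgw]
  have hheadwT : wT.head? = some h₀ := by rw [List.head?_eq_head hww]
  have hlastwT : wT.getLast? = some l₀ := by rw [List.getLast?_eq_getLast hww]
  have hheadC : C.head? = some (c.1, !c.2) := by
    rw [hCdef, invRev, List.head?_reverse, List.getLast?_map, List.getLast?_eq_getLast hgw]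
    rfl
  have hRcx : R c x := by
    rintro ⟨e1, e2⟩
    exact hxc (Prod.ext e1.symm e2)
  have hRxh : R x h₀ := by
    rintro ⟨e1, e2⟩
    refine hxh (Prod.ext ?_ ?_)
    · exact e1
    · rw [e2, Bool.not_not]
  have hRlx' : R l₀ x' := by
    rintro ⟨e1, e2⟩
    exact hxl (Prod.ext e1.symm (Bool.not_inj e2))
  have hRx'C : R x' (c.1, !c.2) := by
    rintro ⟨e1, e2⟩
    refine hxc (Prod.ext e1 ?_)
    rw [Bool.not_inj e2, Bool.not_not]
  have hred : List.Chain' R (A ++ [x] ++ wT ++ [x'] ++ C) := by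
    refine List.IsChain.append ?_ CC ?_
    · refine List.IsChain.append ?_ (List.isChain_singleton x') ?_
      · refine List.IsChain.append ?_ CwT ?_
        · refine List.IsChain.append CA (List.isChain_singleton x) ?_
          · intro p hp q hq
            rw [hlastA] at hp
            simp only [List.head?_cons, Option.mem_some_iff] at hp hq
            rw [← hp, ← hq] at *
            exact hRcx
        · intro p hp q hq
          rw [List.getLast?_append_of_ne_nil _ (by simp : ([x] : List (ι × Bool)) ≠ [])] at hp
          simp only [List.getLast?_singleton, Option.mem_some_iff] at hp
          rw [hheadwT] at hq
          simp only [Option.mem_some_iff] at hq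
          rw [← hp, ← hq]
          exact hRxh
      · intro p hp q hq
        rw [List.getLast?_append_of_ne_nil _ hww] at hp
        rw [hlastwT] at hp
        simp only [List.head?_cons, Option.mem_some_iff] at hp hq
        rw [← hp, ← hq]
        exact hRlx'
    · intro p hp q hq
      rw [List.getLast?_append_of_ne_nil _ (by simp : ([x'] : List (ι × Bool)) ≠ [])] at hp
      simp only [List.getLast?_singleton, Option.mem_some_iff] at hp
      rw [hheadC] at hq
      simp only [Option.mem_some_iff] at hq
      rw [← hp, ← hq]
      exact hRx'C
  have hword : (g * v * g⁻¹).toWord = A ++ [x] ++ wT ++ [x'] ++ C := by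
    rw [hprod, toWord_mk, reduce_eq_self hred]
  rw [hword]
  exact ⟨[x] ++ wT ++ [x'] ++ C, by simp [List.append_assoc]⟩


theorem freeGroup_fg_normal_finiteIndex {ι : Type} (N : Subgroup (FreeGroup ι))
    (hn : N.Normal) (hbot : N ≠ ⊥) (hfg : N.FG) : N.FiniteIndex := by
  classical
  obtain ⟨⟨w, hwN⟩, hw1⟩ := Subgroup.ne_bot_iff_exists_ne_one.mp hbot
  have hw1' : w ≠ 1 := by simpa [Subtype.ext_iff] using hw1
  by_cases htwo : ∃ a b : ι, a ≠ b
  · obtain ⟨a, b, hab⟩ := htwo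
    obtain ⟨S, hS⟩ := hfg
    have hfin1 : ∀ l : List (ι × Bool), ({p | p <+: l} : Set (List (ι × Bool))).Finite := by
      intro l
      have : ({p | p <+: l} : Set (List (ι × Bool))) = {p | p ∈ l.inits} := by
        ext p; simp [List.mem_inits]
      rw [this]
      exact l.inits.finite_toSet
    have hPfin : (({[]} ∪ ⋃ s ∈ (S : Set (FreeGroup ι)),
        {p | p <+: s.toWord} ∪ {p | p <+: s⁻¹.toWord}) : Set (List (ι × Bool))).Finite := by
      refine (Set.finite_singleton _).union ?_
      exact Set.Finite.biUnion S.finite_toSet (fun s _ => (hfin1 _).union (hfin1 _))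
    have hQfin := hPfin.image (fun w => (QuotientGroup.mk (FreeGroup.mk w) : FreeGroup ι ⧸ N))
    have hsurj : ∀ x : FreeGroup ι ⧸ N, x ∈ (fun w => (QuotientGroup.mk (FreeGroup.mk w) :
        FreeGroup ι ⧸ N)) '' ({[]} ∪ ⋃ s ∈ (S : Set (FreeGroup ι)),
        {p | p <+: s.toWord} ∪ {p | p <+: s⁻¹.toWord}) := by
      intro x
      obtain ⟨g, rfl⟩ := QuotientGroup.mk_surjective x
      obtain ⟨h, hhN, hpre⟩ := exists_prefix_in_N hn hab hwN hw1' g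
      have := prefix_coset_mem hn hS h hhN g.toWord hpre
      rwa [mk_toWord] at this
    have hFin : Finite (FreeGroup ι ⧸ N) := by
      have : (Set.univ : Set (FreeGroup ι ⧸ N)).Finite :=
        hQfin.subset (fun x _ => hsurj x)
      exact Set.finite_univ_iff.mp this
    exact @Subgroup.finiteIndex_of_finite_quotient _ _ N hFin
  · have hsub : Subsingleton ι := ⟨fun a b => by
      by_contra hne
      exact htwo ⟨a, b, hne⟩⟩
    rcases isEmpty_or_nonempty ι with hemp | ⟨⟨a⟩⟩
    · exfalso
      apply hw1'
      rw [← toWord_eq_nil_iff]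
      cases h : w.toWord with
      | nil => rfl
      | cons y t => exact (hemp.false y.1).elim
    · have hpow : ∀ g : FreeGroup ι, ∃ k : ℤ, g = (FreeGroup.of a) ^ k := by
        intro g
        refine FreeGroup.induction_on g ⟨0, by simp⟩ (fun x => ⟨1, by
          rw [Subsingleton.elim x a, zpow_one]⟩) ?_ ?_
        · rintro x ⟨k, hk⟩
          exact ⟨-k, by rw [hk, zpow_neg]⟩
        · rintro x y ⟨k, hk⟩ ⟨m, hm⟩
          exact ⟨k + m, by rw [hk, hm, zpow_add]⟩
      obtain ⟨k, hk⟩ := hpow w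
      have hk0 : k ≠ 0 := by
        rintro rfl
        exact hw1' (by simp [hk])
      set n := k.natAbs with hndef
      have hn0 : n ≠ 0 := Int.natAbs_ne_zero.mpr hk0
      haveI : NeZero n := ⟨hn0⟩
      have hpow_mem : (FreeGroup.of a) ^ (n : ℤ) ∈ N := by
        rcases Int.natAbs_eq k with he | he
        · rw [← he, ← hk]; exact hwN
        · have : (n : ℤ) = -k := by omega
          rw [this, zpow_neg, ← hk]
          exact N.inv_mem hwN
      have hsurj2 : Function.Surjective (fun i : ZMod n =>
          (QuotientGroup.mk ((FreeGroup.of a) ^ (i.val : ℤ)) : FreeGroup ι ⧸ N)) := by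
        intro x
        obtain ⟨g, rfl⟩ := QuotientGroup.mk_surjective x
        obtain ⟨m, rfl⟩ := hpow g
        refine ⟨(m : ZMod n), ?_⟩
        simp only
        rw [QuotientGroup.eq]
        have hdvd : (n : ℤ) ∣ m - (((m : ZMod n)).val : ℤ) := by
          have hcast : ((m - (((m : ZMod n)).val : ℤ) : ℤ) : ZMod n) = 0 := by
            push_cast
            rw [ZMod.natCast_val, ZMod.cast_id]
            ring
          exact (ZMod.intCast_zmod_eq_zero_iff_dvd _ n).mp hcast
        obtain ⟨t, ht⟩ := hdvd
        have : ((FreeGroup.of a) ^ ((((m : ZMod n)).val : ℤ)))⁻¹ * (FreeGroup.of a) ^ m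
            = ((FreeGroup.of a) ^ (n : ℤ)) ^ t := by
          rw [← zpow_neg, ← zpow_add, ← zpow_mul, ← ht]
          ring_nf
        rw [this]
        exact N.zpow_mem hpow_mem t
      have hFin : Finite (FreeGroup ι ⧸ N) := Finite.of_surjective _ hsurj2
      exact @Subgroup.finiteIndex_of_finite_quotient _ _ N hFin

end NotFreeAux


open NotFreeAux in
/-- A group with a nontrivial finitely generated normal subgroup of infinite index is
not free; in particular the suspension `F ⋊_φ ℤ` of an infinite finitely generated
group `F` is not a free group. -/
theorem not_free_of_fg_normal_infinite_index_and_suspension :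
    (∀ (G : Type) [Group G] (N : Subgroup G), N.Normal → N ≠ ⊥ → N.FG →
      ¬ N.FiniteIndex → ¬ IsFreeGroup G) ∧
    (∀ (F : Type) [Group F], Infinite F → Group.FG F → ∀ φ : MulAut F,
      ¬ IsFreeGroup (F ⋊[zpowersHom (MulAut F) φ] Multiplicative ℤ)) := by
  have part1 : ∀ (G : Type) [Group G] (N : Subgroup G), N.Normal → N ≠ ⊥ → N.FG →
      ¬ N.FiniteIndex → ¬ IsFreeGroup G := by
    intro G _ N hnorm hbot hfg hinf hfree
    let e : G ≃* FreeGroup (IsFreeGroup.Generators G) := IsFreeGroup.toFreeGroup G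
    let N' : Subgroup (FreeGroup (IsFreeGroup.Generators G)) := N.comap e.symm.toMonoidHom
    have hnorm' : N'.Normal := hnorm.comap e.symm.toMonoidHom
    have hmapeq : N' = N.map e.toMonoidHom := by
      ext x
      rw [Subgroup.mem_map_equiv]
      rfl
    have hbot' : N' ≠ ⊥ := by
      obtain ⟨⟨x, hxN⟩, hx1⟩ := Subgroup.ne_bot_iff_exists_ne_one.mp hbot
      have hx1' : x ≠ 1 := by simpa [Subtype.ext_iff] using hx1
      rw [Subgroup.ne_bot_iff_exists_ne_one]
      refine ⟨⟨e x, by simpa [N', Subgroup.mem_comap] using hxN⟩, ?_⟩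
      simp only [ne_eq, Subtype.ext_iff]
      exact fun h => hx1' (e.injective (by rw [show e x = 1 from h, map_one]))
    have hfg' : N'.FG := by
      obtain ⟨S, hS⟩ := hfg
      rw [hmapeq, ← hS, MonoidHom.map_closure]
      exact (Subgroup.fg_iff _).mpr ⟨_, rfl, S.finite_toSet.image _⟩
    have hFI := freeGroup_fg_normal_finiteIndex N' hnorm' hbot' hfg'
    have hidx : N'.index = N.index :=
      Subgroup.index_comap_of_surjective N (f := e.symm.toMonoidHom) e.symm.surjective
    refine hinf ⟨?_⟩
    rw [← hidx]
    exact hFI.index_ne_zero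
  refine ⟨part1, ?_⟩
  intro F _ hinfF hFG φ hfree
  set G := F ⋊[zpowersHom (MulAut F) φ] Multiplicative ℤ with hGdef
  let N : Subgroup G := (SemidirectProduct.rightHom : G →* Multiplicative ℤ).ker
  have hnorm : N.Normal := MonoidHom.normal_ker SemidirectProduct.rightHom
  have hbot : N ≠ ⊥ := by
    haveI : Nontrivial F := inferInstance
    obtain ⟨x, hx⟩ := exists_ne (1 : F)
    rw [Subgroup.ne_bot_iff_exists_ne_one]
    refine ⟨⟨SemidirectProduct.inl x, ?_⟩, ?_⟩
    · rw [MonoidHom.mem_ker, SemidirectProduct.rightHom_inl]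
    · simp only [ne_eq, Subtype.ext_iff]
      intro h
      have h' : (SemidirectProduct.inl x : G) = ((SemidirectProduct.inl : F →* G) (1 : F)) := by
        rw [map_one]; exact h
      exact hx (SemidirectProduct.inl_injective h')
  have hfg : N.FG := by
    have hrange : N = (SemidirectProduct.inl : F →* G).range :=
      (SemidirectProduct.range_inl_eq_ker_rightHom).symm
    obtain ⟨S, hS⟩ := Group.fg_def.mp hFG
    rw [hrange, MonoidHom.range_eq_map, ← hS, MonoidHom.map_closure]
    exact (Subgroup.fg_iff _).mpr ⟨_, rfl, S.finite_toSet.image _⟩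
  have hinfidx : ¬ N.FiniteIndex := by
    intro hFI
    haveI := hFI
    haveI : Finite (G ⧸ N) := Subgroup.finite_quotient_of_finiteIndex
    have e := QuotientGroup.quotientKerEquivOfSurjective
      (SemidirectProduct.rightHom : G →* Multiplicative ℤ)
      SemidirectProduct.rightHom_surjective
    haveI : Finite (Multiplicative ℤ) := Finite.of_equiv _ e.toEquiv
    exact not_finite (Multiplicative ℤ)
  exact part1 G N hnorm hbot hfg hinfidx hfree
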